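/- Let b ≥ 0 and let m1, m0 : ℝ → ℝ satisfy the smoothness assumption with constant b on [0,1], and suppose in addition there are constants Yu1 and Yl0 with m1(v) ≤ Yu1 and m0(v) ≥ Yl0 for all v ∈ [0,1]. Let 0 ≤ p' < p ≤ 1 and set ΔY := ∫_{p'}^{p} (m1(v) − m0(v)) dv. Then ∫_0^1 (m1(v) − m0(v)) dv ≤ min{ Yu1 − Yl0, ΔY/(p − p') + (2b/3)·(p³ − p'³)/(p − p') − b·(p² − p'²)/(p − p') + b }. -/

import Mathlib

open Filter Asymptotics MeasureTheory intervalIntegral Set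

lemma hasDerivAt_mul_abs (x : ℝ) : HasDerivAt (fun y : ℝ => y * |y|) (2 * |x|) x := by
  rcases lt_trichotomy x 0 with hx | hx | hx
  · have h1 : HasDerivAt (fun y : ℝ => -(y * y)) (2 * |x|) x := by
      have h := ((hasDerivAt_id x).mul (hasDerivAt_id x)).neg
      refine h.congr_deriv ?_
      rw [abs_of_neg hx]; simp only [id_eq]; ring
    refine h1.congr_of_eventuallyEq ?_
    filter_upwards [eventually_lt_nhds hx] with y hy
    rw [abs_of_neg hy]; ring
  · subst hx
    rw [hasDerivAt_iff_isLittleO]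
    simp only [abs_zero, mul_zero, sub_zero, zero_mul, smul_eq_mul]
    have : (fun y : ℝ => y * |y|) =o[nhds (0:ℝ)] fun y => y := by
      rw [isLittleO_iff]
      intro c hc
      have : ∀ᶠ y : ℝ in nhds 0, |y| < c := by
        have := Metric.ball_mem_nhds (0:ℝ) hc
        filter_upwards [this] with y hy
        simpa [Real.dist_eq] using hy
      filter_upwards [this] with y hy
      rw [Real.norm_eq_abs, Real.norm_eq_abs, abs_mul, abs_abs]
      exact mul_le_mul_of_nonneg_right hy.le (abs_nonneg _) |>.trans_eq (by ring)
    simpa using this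
  · have h1 : HasDerivAt (fun y : ℝ => y * y) (2 * |x|) x := by
      have h := (hasDerivAt_id x).mul (hasDerivAt_id x)
      refine h.congr_deriv ?_
      rw [abs_of_pos hx]; simp only [id_eq]; ring
    refine h1.congr_of_eventuallyEq ?_
    filter_upwards [eventually_gt_nhds hx] with y hy
    rw [abs_of_pos hy]

lemma hasDerivAt_psi (c x : ℝ) : HasDerivAt (fun y : ℝ => (c - y)^2 * |c - y| / 3) (-((c - x) * |c - x|)) x := by
  have hlin : HasDerivAt (fun y : ℝ => c - y) (-1) x := by
    exact (hasDerivAt_id' x).const_sub c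
  have hpsi : HasDerivAt (fun y : ℝ => y * (y * |y|)) (1 * ((c - x) * |c - x|) + (c - x) * (2 * |c - x|)) (c - x) :=
    (hasDerivAt_id (c - x)).mul (hasDerivAt_mul_abs (c - x))
  have h := ((hpsi.comp x hlin).div_const 3)
  convert h using 1
  · rfl
  · rfl
  · funext y
    show (c - y)^2 * |c - y| / 3 = (c - y) * ((c - y) * |c - y|) / 3
    ring
  · ring

lemma integral_abs_sub (v p' p : ℝ) :
    ∫ u in p'..p, |v - u| = ((p - v) * |p - v| - (p' - v) * |p' - v|) / 2 := by
  have key : ∀ u : ℝ, HasDerivAt (fun u : ℝ => (u - v) * |u - v| / 2) (|v - u|) u := by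
    intro u
    have hlin : HasDerivAt (fun u : ℝ => u - v) 1 u := (hasDerivAt_id u).sub_const v
    have h := (((hasDerivAt_mul_abs (u - v)).comp u hlin).div_const 2)
    refine h.congr_deriv ?_
    rw [abs_sub_comm]; ring
  rw [intervalIntegral.integral_eq_sub_of_hasDerivAt (fun u _ => key u)
    (((continuous_const.sub continuous_id).abs).intervalIntegrable _ _)]
  ring

lemma integral_outer (p' p : ℝ) :
    ∫ v in (0:ℝ)..1, ((p - v) * |p - v| - (p' - v) * |p' - v|) =
      ((p' - 1)^2 * |p' - 1| - (p - 1)^2 * |p - 1|) / 3 - ((p' - 0)^2 * |p' - 0| - (p - 0)^2 * |p - 0|) / 3 := by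
  have key : ∀ v : ℝ, HasDerivAt
      (fun v : ℝ => (p' - v)^2 * |p' - v| / 3 - (p - v)^2 * |p - v| / 3)
      ((p - v) * |p - v| - (p' - v) * |p' - v|) v := by
    intro v
    have h := (hasDerivAt_psi p' v).sub (hasDerivAt_psi p v)
    refine h.congr_deriv ?_; ring
  rw [intervalIntegral.integral_eq_sub_of_hasDerivAt (fun v _ => key v)
    ((((continuous_const.sub continuous_id).mul (continuous_const.sub continuous_id).abs).sub
      ((continuous_const.sub continuous_id).mul (continuous_const.sub continuous_id).abs)).intervalIntegrable _ _)]
  ring_nf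



/-- With a bounded outcome (`m1 ≤ Yu1`, `m0 ≥ Yl0` on `[0,1]`), the ATE is bounded
above by the minimum of the Manski worst-case bound `Yu1 - Yl0` and the smoothness-based bound. -/
theorem ate_upper_bound_with_manski
    (b : ℝ) (hb : 0 ≤ b) (m1 m0 : ℝ → ℝ)
    (hm1 : ∀ v1 ∈ Set.Icc (0:ℝ) 1, ∀ v2 ∈ Set.Icc (0:ℝ) 1, |m1 v1 - m1 v2| ≤ b * |v1 - v2|)
    (hm0 : ∀ v1 ∈ Set.Icc (0:ℝ) 1, ∀ v2 ∈ Set.Icc (0:ℝ) 1, |m0 v1 - m0 v2| ≤ b * |v1 - v2|)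
    (Yu1 Yl0 : ℝ)
    (hub : ∀ v ∈ Set.Icc (0:ℝ) 1, m1 v ≤ Yu1)
    (hlb : ∀ v ∈ Set.Icc (0:ℝ) 1, Yl0 ≤ m0 v)
    (p' p : ℝ) (hp' : 0 ≤ p') (hpp : p' < p) (hp : p ≤ 1)
    (ΔY : ℝ) (hΔY : ΔY = ∫ v in p'..p, (m1 v - m0 v)) :
    (∫ v in (0:ℝ)..1, (m1 v - m0 v)) ≤
      min (Yu1 - Yl0)
        (ΔY / (p - p') + (2 * b / 3) * (p ^ 3 - p' ^ 3) / (p - p')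
          - b * (p ^ 2 - p' ^ 2) / (p - p') + b) := by
  have hp0 : (0:ℝ) ≤ p := hp'.trans hpp.le
  have hsub : Set.Icc p' p ⊆ Set.Icc (0:ℝ) 1 := Set.Icc_subset_Icc hp' hp
  -- continuity
  have hc1 : ContinuousOn m1 (Set.Icc (0:ℝ) 1) := by
    refine (LipschitzOnWith.of_dist_le_mul (K := b.toNNReal) ?_).continuousOn
    intro x hx y hy
    rw [Real.dist_eq, Real.dist_eq, Real.coe_toNNReal b hb]
    exact hm1 x hx y hy
  have hc0 : ContinuousOn m0 (Set.Icc (0:ℝ) 1) := by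
    refine (LipschitzOnWith.of_dist_le_mul (K := b.toNNReal) ?_).continuousOn
    intro x hx y hy
    rw [Real.dist_eq, Real.dist_eq, Real.coe_toNNReal b hb]
    exact hm0 x hx y hy
  have hcD : ContinuousOn (fun v => m1 v - m0 v) (Set.Icc (0:ℝ) 1) := hc1.sub hc0
  have hIntD : IntervalIntegrable (fun v => m1 v - m0 v) volume p' p := by
    refine (hcD.mono ?_).intervalIntegrable
    rw [Set.uIcc_of_le hpp.le]; exact hsub
  have hIntD01 : IntervalIntegrable (fun v => m1 v - m0 v) volume 0 1 := by
    refine (hcD.mono ?_).intervalIntegrable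
    rw [Set.uIcc_of_le zero_le_one]
  -- pointwise Lipschitz bound on the difference
  have hpt : ∀ v ∈ Set.Icc (0:ℝ) 1, ∀ u ∈ Set.Icc (0:ℝ) 1,
      m1 v - m0 v ≤ (m1 u - m0 u) + 2 * b * |v - u| := by
    intro v hv u hu
    have h1 : m1 v - m1 u ≤ b * |v - u| := (le_abs_self _).trans (hm1 v hv u hu)
    have h0 : m0 u - m0 v ≤ b * |v - u| := by
      have := (le_abs_self _).trans (hm0 u hu v hv)
      rwa [abs_sub_comm] at this
    linarith
  -- Step 1
  have step1 : ∀ v ∈ Set.Icc (0:ℝ) 1,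
      (m1 v - m0 v) * (p - p') ≤ ΔY + b * ((p - v) * |p - v| - (p' - v) * |p' - v|) := by
    intro v hv
    have habs : IntervalIntegrable (fun u => 2 * b * |v - u|) volume p' p :=
      (continuous_const.mul (continuous_const.sub continuous_id).abs).intervalIntegrable _ _
    have hmono := intervalIntegral.integral_mono_on hpp.le (intervalIntegrable_const)
      (hIntD.add habs)
      (fun u hu => hpt v hv u (hsub hu))
    rw [intervalIntegral.integral_const] at hmono
    rw [intervalIntegral.integral_add hIntD habs, intervalIntegral.integral_const_mul,
      integral_abs_sub] at hmono
    calc (m1 v - m0 v) * (p - p') = (p - p') • (m1 v - m0 v) := by rw [smul_eq_mul]; ring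
    _ ≤ _ := hmono.trans_eq (by rw [hΔY]; ring)
  -- Step 2
  have step2 : (∫ v in (0:ℝ)..1, (m1 v - m0 v)) * (p - p')
      ≤ ΔY + b * (2 * (p ^ 3 - p' ^ 3) / 3 - (p ^ 2 - p' ^ 2) + (p - p')) := by
    have hg : Continuous (fun v : ℝ => (p - v) * |p - v| - (p' - v) * |p' - v|) :=
      ((continuous_const.sub continuous_id).mul (continuous_const.sub continuous_id).abs).sub
        ((continuous_const.sub continuous_id).mul (continuous_const.sub continuous_id).abs)
    have hrc : Continuous (fun v : ℝ => ΔY + b * ((p - v) * |p - v| - (p' - v) * |p' - v|)) :=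
      continuous_const.add (continuous_const.mul hg)
    have hmono := intervalIntegral.integral_mono_on zero_le_one
      (hIntD01.mul_const (p - p')) (hrc.intervalIntegrable _ _)
      (fun v hv => step1 v hv)
    rw [intervalIntegral.integral_mul_const] at hmono
    rw [intervalIntegral.integral_add (intervalIntegrable_const)
      ((hg.intervalIntegrable _ _).const_mul b)] at hmono
    rw [intervalIntegral.integral_const, intervalIntegral.integral_const_mul,
      integral_outer] at hmono
    refine hmono.trans_eq ?_
    simp only [smul_eq_mul, sub_zero]
    rw [abs_of_nonneg hp0, abs_of_nonneg hp', abs_of_nonpos (by linarith : p - 1 ≤ 0),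
      abs_of_nonpos (by linarith : p' - 1 ≤ 0)]
    ring
  refine le_min ?_ ?_
  · have hmono := intervalIntegral.integral_mono_on zero_le_one hIntD01
      (_root_.intervalIntegrable_const (c := Yu1 - Yl0))
      (fun v hv => by have h1 := hub v hv; have h0 := hlb v hv; linarith)
    simpa using hmono
  · have hd : (0:ℝ) < p - p' := by linarith
    have heq : ΔY / (p - p') + (2 * b / 3) * (p ^ 3 - p' ^ 3) / (p - p')
          - b * (p ^ 2 - p' ^ 2) / (p - p') + b
        = (ΔY + b * (2 * (p ^ 3 - p' ^ 3) / 3 - (p ^ 2 - p' ^ 2) + (p - p'))) / (p - p') := by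
      field_simp
      ring
    rw [heq, le_div_iff₀ hd]
    exact step2
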